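/- Let $f : X \to Y$ be a continuous surjection of compact metric spaces such that every fiber of $f$ is zero-dimensional (totally disconnected). If $Y$ has covering dimension zero, then $X$ has covering dimension zero. -/
import Mathlib

open Set Metric

def CovDimLE (X : Type*) [TopologicalSpace X] (n : ℕ) : Prop :=
  ∀ (ι : Type) (U : ι → Set X), (∀ i, IsOpen (U i)) → (⋃ i, U i) = Set.univ →
    ∃ (κ : Type) (V : κ → Set X),
      (∀ j, IsOpen (V j)) ∧ (⋃ j, V j) = Set.univ ∧ (∀ j, ∃ i, V j ⊆ U i) ∧
      ∀ x : X, {j | x ∈ V j}.Finite ∧ {j | x ∈ V j}.ncard ≤ n + 1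

/-- Covering dimension zero implies totally separated, for metric spaces. -/
lemma totallySeparated_of_covDimLE_zero (Z : Type*) [MetricSpace Z]
    (h : CovDimLE Z 0) : TotallySeparatedSpace Z := by
  constructor
  intro x _ y _ hxy
  -- cover by complements of the two points
  obtain ⟨κ, V, hVopen, hVcov, hVref, hVmul⟩ :=
    h Bool (fun b => if b then ({y}ᶜ : Set Z) else ({x}ᶜ : Set Z))
      (by intro b; cases b <;> exact isOpen_compl_singleton)
      (by
        ext z
        simp only [Set.mem_iUnion, Set.mem_univ, iff_true]
        by_cases hz : z = x
        · exact ⟨true, by simp [hz, hxy]⟩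
        · exact ⟨false, by simp [hz]⟩)
  have hxU : x ∈ (Set.univ : Set Z) := trivial
  rw [← hVcov] at hxU
  obtain ⟨j₀, hj₀⟩ := Set.mem_iUnion.mp hxU
  obtain ⟨i, hi⟩ := hVref j₀
  have hyV : y ∉ V j₀ := by
    cases i with
    | false => exact absurd (hi hj₀) (by simp)
    | true => intro hy; exact absurd (hi hy) (by simp)
  -- V j₀ has open complement
  have hcompl : (V j₀)ᶜ = ⋃ j ∈ {j | j ≠ j₀}, V j := by
    ext z
    simp only [Set.mem_compl_iff, Set.mem_iUnion, Set.mem_setOf_eq]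
    constructor
    · intro hz
      have : z ∈ (Set.univ : Set Z) := trivial
      rw [← hVcov] at this
      obtain ⟨j, hj⟩ := Set.mem_iUnion.mp this
      exact ⟨j, fun e => hz (e ▸ hj), hj⟩
    · rintro ⟨j, hne, hj⟩ hz
      have h2 : ({j, j₀} : Set κ) ⊆ {k | z ∈ V k} := by
        rintro k (rfl | rfl) <;> assumption
      have h3 := Set.ncard_le_ncard h2 (hVmul z).1
      rw [Set.ncard_pair hne] at h3
      have h4 := (hVmul z).2
      omega
  refine ⟨V j₀, (V j₀)ᶜ, hVopen j₀, ?_, hj₀, hyV, by simp, disjoint_compl_right⟩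
  rw [hcompl]
  exact isOpen_biUnion fun j _ => hVopen j

/-- A compact metric totally disconnected space has covering dimension zero. -/
lemma covDimLE_zero_of_totallyDisconnected (X : Type*) [MetricSpace X] [CompactSpace X]
    [TotallyDisconnectedSpace X] : CovDimLE X 0 := by
  classical
  intro ι U hUopen hUcov
  -- each point has a clopen neighborhood inside some U i
  have hC : ∀ x : X, ∃ C : Set X, IsClopen C ∧ x ∈ C ∧ ∃ i, C ⊆ U i := by
    intro x
    have : x ∈ ⋃ i, U i := hUcov ▸ trivial
    obtain ⟨i, hi⟩ := Set.mem_iUnion.mp this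
    obtain ⟨C, hCclopen, hxC, hCU⟩ := compact_exists_isClopen_in_isOpen (hUopen i) hi
    exact ⟨C, hCclopen, hxC, i, hCU⟩
  choose C hCclopen hxC hCU using hC
  -- compactness: finitely many C's cover
  obtain ⟨s, hs⟩ := IsCompact.elim_finite_subcover isCompact_univ C
    (fun x => (hCclopen x).2) (fun x _ => Set.mem_iUnion.mpr ⟨x, hxC x⟩)
  -- enumerate s by Fin n
  set n := s.card with hn
  let g : Fin n → X := fun k => (s.equivFin.symm k : X)
  -- disjointify
  let V : Fin n → Set X := fun k => C (g k) ∩ ⋂ m ∈ Finset.univ.filter (· < k), (C (g m))ᶜ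
  have hVopen : ∀ k, IsOpen (V k) := by
    intro k
    apply IsOpen.inter (hCclopen (g k)).2
    exact isOpen_biInter_finset fun m _ => (hCclopen (g m)).1.isOpen_compl
  have hVsub : ∀ k, V k ⊆ C (g k) := fun k => Set.inter_subset_left
  have hVcov : (⋃ k, V k) = Set.univ := by
    ext z
    simp only [Set.mem_iUnion, Set.mem_univ, iff_true]
    have hz : z ∈ ⋃ x ∈ s, C x := hs trivial
    obtain ⟨x, hxs, hzx⟩ := Set.mem_iUnion₂.mp hz
    have hne : (Finset.univ.filter (fun k : Fin n => z ∈ C (g k))).Nonempty := by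
      refine ⟨s.equivFin ⟨x, hxs⟩, Finset.mem_filter.mpr ⟨Finset.mem_univ _, ?_⟩⟩
      show z ∈ C (g (s.equivFin ⟨x, hxs⟩))
      simp only [g, Equiv.symm_apply_apply]
      exact hzx
    set k₀ := (Finset.univ.filter (fun k : Fin n => z ∈ C (g k))).min' hne with hk₀
    have hk₀mem := (Finset.univ.filter (fun k : Fin n => z ∈ C (g k))).min'_mem hne
    simp only [Finset.mem_filter, Finset.mem_univ, true_and] at hk₀mem
    refine ⟨k₀, hk₀mem, ?_⟩
    simp only [Set.mem_iInter, Finset.mem_filter, Finset.mem_univ, true_and,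
      Set.mem_compl_iff]
    intro m hm hzm
    have : k₀ ≤ m := Finset.min'_le _ m (by simp [hzm])
    omega
  refine ⟨Fin n, V, hVopen, hVcov, fun k => ⟨(hCU (g k)).choose,
    (hVsub k).trans (hCU (g k)).choose_spec⟩, ?_⟩
  intro z
  have hsub : {k | z ∈ V k}.Subsingleton := by
    intro a ha b hb
    by_contra hab
    rcases lt_or_gt_of_ne hab with hlt | hlt
    · have := hb.2
      simp only [Set.mem_iInter, Finset.mem_filter, Finset.mem_univ, true_and,
        Set.mem_compl_iff] at this
      exact this a hlt ha.1
    · have := ha.2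
      simp only [Set.mem_iInter, Finset.mem_filter, Finset.mem_univ, true_and,
        Set.mem_compl_iff] at this
      exact this b hlt hb.1
  exact ⟨hsub.finite, (Set.ncard_le_one hsub.finite).mpr fun _ ha _ hb => hsub ha hb⟩

theorem light_map_zero_dim {X Y : Type*} [MetricSpace X] [CompactSpace X]
    [MetricSpace Y] [CompactSpace Y] (f : C(X, Y)) (hsurj : Function.Surjective ⇑f)
    (hfib : ∀ y : Y, CovDimLE ↥(⇑f ⁻¹' {y}) 0) (hY : CovDimLE Y 0) :
    CovDimLE X 0 := by
  have hYts : TotallySeparatedSpace Y := totallySeparated_of_covDimLE_zero Y hY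
  have hfibts : ∀ y : Y, TotallySeparatedSpace ↥(⇑f ⁻¹' {y}) :=
    fun y => totallySeparated_of_covDimLE_zero _ (hfib y)
  have hXtd : TotallyDisconnectedSpace X := by
    constructor
    intro t _ ht
    -- f '' t is preconnected in Y, hence subsingleton, so t lies in a fiber
    have himg : (⇑f '' t).Subsingleton :=
      (TotallySeparatedSpace.totallyDisconnectedSpace Y).1 _ (Set.subset_univ _)
        (ht.image _ f.continuous.continuousOn)
    rcases t.eq_empty_or_nonempty with rfl | ⟨x₀, hx₀⟩
    · exact Set.subsingleton_empty
    · set y := f x₀ with hy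
      have htfib : t ⊆ ⇑f ⁻¹' {y} := by
        intro x hx
        exact himg ⟨x, hx, rfl⟩ ⟨x₀, hx₀, rfl⟩
      -- transfer to the fiber subtype
      haveI := hfibts y
      haveI : TotallyDisconnectedSpace ↥(⇑f ⁻¹' {y}) :=
        TotallySeparatedSpace.totallyDisconnectedSpace _
      set s : Set ↥(⇑f ⁻¹' {y}) := Subtype.val ⁻¹' t with hsdef
      have hst : Subtype.val '' s = t := by
        rw [hsdef, Subtype.image_preimage_coe]
        exact Set.inter_eq_right.mpr htfib
      have hspc : IsPreconnected s := by
        rw [← Topology.IsInducing.subtypeVal.isPreconnected_image, hst]; exact ht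
      have hss : s.Subsingleton :=
        this.1 s (Set.subset_univ _) hspc
      rw [← hst]
      exact hss.image _
  exact covDimLE_zero_of_totallyDisconnected X
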